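/- Conversely, if y* minimizes Σ_i f_i and each f_i is differentiable and convex, then there exists λ* ∈ ℝ^N such that (r*, λ*) with r* = y*·1_N satisfies -∇F(r*) - Lλ* = 0 and Lr* = 0. -/

import Mathlib

/-- Conversely, if `y*` minimizes `∑ i, f i` with each `f i` differentiable and convex, and
`L` is the Laplacian of a connected graph (so `L 1 = 0` and the range of `L` is the orthogonal
complement of `1`), then there exists `λ*` such that `(r*, λ*)` with `r* = y* • 1` satisfies
`-∇F(r*) - Lλ* = 0` and `Lr* = 0`. -/
theorem optimal_is_equilibrium
    (N : ℕ) (f : Fin N → ℝ → ℝ)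
    (hdiff : ∀ i, Differentiable ℝ (f i))
    (hconv : ∀ i, ConvexOn ℝ Set.univ (f i))
    (ystar : ℝ) (hmin : ∀ y : ℝ, (∑ i, f i ystar) ≤ ∑ i, f i y)
    (L : Matrix (Fin N) (Fin N) ℝ)
    (hLones : L.mulVec (fun _ => (1 : ℝ)) = 0)
    (hLrange : ∀ v : Fin N → ℝ, (∑ i, v i) = 0 → ∃ w : Fin N → ℝ, L.mulVec w = v) :
    ∃ lstar : Fin N → ℝ,
      (∀ i, -(deriv (f i) ystar) - L.mulVec lstar i = 0) ∧
      L.mulVec (fun _ => ystar) = 0 := by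
  have hgd : HasDerivAt (fun y => ∑ i, f i y) (∑ i, deriv (f i) ystar) ystar :=
    HasDerivAt.fun_sum fun i _ => ((hdiff i).differentiableAt).hasDerivAt
  have hmin' : IsLocalMin (fun y => ∑ i, f i y) ystar :=
    Filter.Eventually.of_forall hmin
  have hsum : (∑ i, deriv (f i) ystar) = 0 := by
    have := hmin'.deriv_eq_zero
    rw [hgd.deriv] at this
    exact this
  obtain ⟨w, hw⟩ := hLrange (fun i => -(deriv (f i) ystar)) (by
    simp [Finset.sum_neg_distrib, hsum])
  refine ⟨w, fun i => by rw [hw]; ring, ?_⟩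
  have : (fun _ : Fin N => ystar) = ystar • (fun _ : Fin N => (1 : ℝ)) := by
    funext i; simp
  rw [this, Matrix.mulVec_smul, hLones, smul_zero]
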